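/- Elementary differentials turn grafting into the product ◁: if σ is a rooted tree with vertex set V′ and τ is a rooted tree with vertex set V, with V and V′ disjoint, then F(σ ↷ τ)((f^w)_{w ∈ V′∪V}) = F(τ)((f^v)_{v ∈ V}) ◁ F(σ)((f^u)_{u ∈ V′}) for all smooth f^w ∈ C_d. -/

import Mathlib

open Finset

/-- The type of smooth maps from `ℝ^d` to `ℝ^d` (i.e. `C_d = C^∞(ℝ^d, ℝ^d)`). -/
def SmoothMapD (d : ℕ) : Type :=
  {f : (Fin d → ℝ) → (Fin d → ℝ) // ∀ k : ℕ, ContDiff ℝ k f}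

/-- A rooted tree on a finite vertex set `V`: a set `E` of (parent, child) edges together with a
root, such that every non-root vertex has a unique parent, the root has no parent, and every
vertex reaches the root by iteratively passing to its parent. -/
structure RTree (V : Type) [Fintype V] [DecidableEq V] where
  E : Finset (V × V)
  root : V
  parent_unique : ∀ v : V, v ≠ root → ∃! u : V, (u, v) ∈ E
  root_no_parent : ∀ u : V, (u, root) ∉ E
  reaches_root : ∀ v : V, Relation.ReflTransGen (fun a b : V => (b, a) ∈ E) v root

/-- The children of a vertex `v` of a rooted tree: `C_v = {w | (v, w) ∈ E}`. -/
def RTree.children {V : Type} [Fintype V] [DecidableEq V] (τ : RTree V) (v : V) :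
    Finset V :=
  Finset.univ.filter (fun w => (v, w) ∈ τ.E)

/-- Partial derivative `∂_i` of a scalar function on `ℝ^d`. -/
noncomputable def pd {d : ℕ} (i : Fin d) (g : (Fin d → ℝ) → ℝ) : (Fin d → ℝ) → ℝ :=
  fun x => fderiv ℝ g x (Pi.single i 1)

/-- Iterated partial derivatives along a list of directions. -/
noncomputable def pdList {d : ℕ} (l : List (Fin d)) (g : (Fin d → ℝ) → ℝ) : (Fin d → ℝ) → ℝ :=
  l.foldr pd g

/-- The elementary differential of a rooted tree, in closed form: the `j`-th component of
`F(τ)((f^v)_v)(x)` is the sum over all choices of an index `idx v ∈ [d]` for each vertex `v`,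
subject to `idx root = j`, of the product over all vertices `v` of
`∂_{idx c₁} ⋯ ∂_{idx c_k} (f^v)_{idx v} (x)` where `c₁, …, c_k` are the children of `v`.
For smooth inputs this agrees with the usual recursive definition. -/
noncomputable def elemDiff {V : Type} [Fintype V] [DecidableEq V] {d : ℕ} (τ : RTree V)
    (f : V → ((Fin d → ℝ) → (Fin d → ℝ))) : (Fin d → ℝ) → (Fin d → ℝ) :=
  fun x j =>
    ∑ idx : V → Fin d,
      if idx τ.root = j then
        ∏ v : V, pdList ((τ.children v).toList.map idx) (fun y => f v y (idx v)) x
      else 0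

/-- The elementary differential `F(τ)` evaluated on smooth maps. -/
noncomputable def Fel (d : ℕ) {V : Type} [Fintype V] [DecidableEq V] (τ : RTree V)
    (f : V → SmoothMapD d) : (Fin d → ℝ) → (Fin d → ℝ) :=
  elemDiff τ (fun v => (f v).1)
/-- The pre-Lie product `f ◁ g = ∑ i, g_i ∂_i f` on maps `ℝ^d → ℝ^d`. -/
noncomputable def tri {d : ℕ} (f g : (Fin d → ℝ) → (Fin d → ℝ)) :
    (Fin d → ℝ) → (Fin d → ℝ) :=
  fun x j => ∑ i : Fin d, g x i * fderiv ℝ (fun y => f y j) x (Pi.single i 1)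

namespace ElemDiffGraft

variable {d : ℕ}

/-- Smoothness predicate for scalar functions. -/
def Sm (g : (Fin d → ℝ) → ℝ) : Prop := ∀ k : ℕ, ContDiff ℝ k g

lemma Sm.diff {g : (Fin d → ℝ) → ℝ} (hg : Sm g) : Differentiable ℝ g :=
  (hg 1).differentiable (by norm_num)

lemma Sm.pd {g : (Fin d → ℝ) → ℝ} (hg : Sm g) (i : Fin d) : Sm (pd i g) := by
  intro k
  have h1 : ContDiff ℝ k (fderiv ℝ g) :=
    (hg (k + 1)).fderiv_right (le_of_eq (by norm_cast))
  exact (ContinuousLinearMap.apply ℝ ℝ (Pi.single i 1)).contDiff.comp h1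

lemma pd_eq_snd {g : (Fin d → ℝ) → ℝ} (hg : Sm g) (i k : Fin d) (x : Fin d → ℝ) :
    pd i (pd k g) x = fderiv ℝ (fderiv ℝ g) x (Pi.single i 1) (Pi.single k 1) := by
  have hdf : DifferentiableAt ℝ (fderiv ℝ g) x :=
    (((hg 2).fderiv_right (m := 1) (le_of_eq (by norm_cast))).differentiable (by norm_num)) x
  have : pd k g = fun y => (fderiv ℝ g y) (Pi.single k 1) := rfl
  rw [_root_.pd, this, fderiv_clm_apply hdf (differentiableAt_const _)]
  simp

lemma pd_comm {g : (Fin d → ℝ) → ℝ} (hg : Sm g) (i k : Fin d) :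
    pd i (pd k g) = pd k (pd i g) := by
  funext x
  rw [pd_eq_snd hg i k x, pd_eq_snd hg k i x]
  exact ((hg 2).contDiffAt.isSymmSndFDerivAt (by norm_num)) _ _

lemma Sm.pdList {g : (Fin d → ℝ) → ℝ} (hg : Sm g) (l : List (Fin d)) : Sm (pdList l g) := by
  induction l with
  | nil => exact hg
  | cons a l ih => exact ih.pd a

lemma pdList_perm {l l' : List (Fin d)} (h : l.Perm l') :
    ∀ g : (Fin d → ℝ) → ℝ, Sm g → pdList l g = pdList l' g := by
  induction h with
  | nil => intro g hg; rfl
  | cons a h ih => intro g hg; show pd a (pdList _ g) = pd a (pdList _ g); rw [ih g hg]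
  | swap a b l => intro g hg; show pd b (pd a (pdList l g)) = pd a (pd b (pdList l g)); rw [pd_comm (hg.pdList l) b a]
  | trans h1 h2 ih1 ih2 => intro g hg; rw [ih1 g hg, ih2 g hg]

end ElemDiffGraft
namespace ElemDiffGraft

lemma toList_image_perm {α β : Type*} [DecidableEq α] [DecidableEq β]
    (C : Finset α) (emb : α → β) (hemb : Function.Injective emb) {γ : Type*} (idx : β → γ) :
    ((C.image emb).toList.map idx).Perm (C.toList.map (idx ∘ emb)) := by
  rw [← Multiset.coe_eq_coe]
  simp only [← Multiset.map_coe, Finset.coe_toList,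
    Finset.image_val_of_injOn (hemb.injOn), Multiset.map_map]

end ElemDiffGraft
open ElemDiffGraft in
theorem elemDiff_graft (d : ℕ) (hd : 1 ≤ d) {V V' : Type} [Fintype V] [DecidableEq V]
    [Fintype V'] [DecidableEq V'] (τ : RTree V) (s : RTree V')
    (g : V → RTree (V ⊕ V'))
    (hgE : ∀ v : V, (g v).E =
      τ.E.image (Prod.map Sum.inl Sum.inl) ∪ s.E.image (Prod.map Sum.inr Sum.inr) ∪
        {(Sum.inl v, Sum.inr s.root)})
    (hgroot : ∀ v : V, (g v).root = Sum.inl τ.root)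
    (f : V ⊕ V' → SmoothMapD d) (x : Fin d → ℝ) (j : Fin d) :
    ∑ v : V, Fel d (g v) f x j =
      tri (Fel d τ (fun v => f (Sum.inl v))) (Fel d s (fun u => f (Sum.inr u))) x j := by
  classical
  -- children of the grafted trees
  have hchl : ∀ v u : V, (g v).children (Sum.inl u) =
      if u = v then insert (Sum.inr s.root) ((τ.children u).image Sum.inl)
      else (τ.children u).image Sum.inl := by
    intro v u
    ext w
    simp only [RTree.children, Finset.mem_filter, Finset.mem_univ, true_and, hgE,
      Finset.mem_union, Finset.mem_image, Finset.mem_singleton, Prod.map, Prod.ext_iff]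
    by_cases h : u = v <;> aesop
  have hchr : ∀ v : V, ∀ u : V', (g v).children (Sum.inr u) =
      (s.children u).image Sum.inr := by
    intro v u
    ext w
    simp only [RTree.children, Finset.mem_filter, Finset.mem_univ, true_and, hgE,
      Finset.mem_union, Finset.mem_image, Finset.mem_singleton, Prod.map, Prod.ext_iff]
    aesop
  -- smoothness of components
  have hFs : ∀ (w : V ⊕ V') (i : Fin d), Sm (fun y => (f w).1 y i) := by
    intro w i k
    exact (ContinuousLinearMap.proj i : ((Fin d) → ℝ) →L[ℝ] ℝ).contDiff.comp ((f w).2 k)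
  set P : V → (V → Fin d) → (Fin d → ℝ) → ℝ := fun v a =>
    pdList ((τ.children v).toList.map a) (fun y => (f (Sum.inl v)).1 y (a v)) with hPdef
  set Q : V' → (V' → Fin d) → (Fin d → ℝ) → ℝ := fun u b =>
    pdList ((s.children u).toList.map b) (fun y => (f (Sum.inr u)).1 y (b u)) with hQdef
  have hP : ∀ v a, Sm (P v a) := fun v a => (hFs _ _).pdList _
  have hQ : ∀ u b, Sm (Q u b) := fun u b => (hFs _ _).pdList _
  -- Step A : compute each Fel d (g v) f x j
  have stepA : ∀ v : V, Fel d (g v) f x j =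
      ∑ a : V → Fin d, ∑ b : V' → Fin d,
        if a τ.root = j then
          ((∏ u ∈ Finset.univ.erase v, P u a x) * pd (b s.root) (P v a) x) *
            ∏ u : V', Q u b x
        else 0 := by
    intro v
    rw [show Fel d (g v) f x j = ∑ idx : (V ⊕ V') → Fin d,
        if idx ((g v).root) = j then
          ∏ w : V ⊕ V',
            pdList (((g v).children w).toList.map idx) (fun y => (f w).1 y (idx w)) x
        else 0 from rfl]
    rw [← Equiv.sum_comp (Equiv.sumArrowEquivProdArrow V V' (Fin d)).symm]
    rw [Fintype.sum_prod_type]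
    refine Finset.sum_congr rfl fun a _ => Finset.sum_congr rfl fun b _ => ?_
    set idx := (Equiv.sumArrowEquivProdArrow V V' (Fin d)).symm (a, b) with hidxdef
    have hl : ∀ u, idx (Sum.inl u) = a u := fun u => rfl
    have hr : ∀ u, idx (Sum.inr u) = b u := fun u => rfl
    rw [hgroot, hl]
    by_cases hc : a τ.root = j
    · simp only [hc, if_true]
      rw [Fintype.prod_sum_type]
      have hTr : ∀ u : V',
          pdList (((g v).children (Sum.inr u)).toList.map idx)
            (fun y => (f (Sum.inr u)).1 y (idx (Sum.inr u))) = Q u b := by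
        intro u
        rw [hchr, hr]
        rw [pdList_perm (toList_image_perm (s.children u) Sum.inr Sum.inr_injective idx)
          _ (hFs _ _)]
        have : idx ∘ Sum.inr = b := funext hr
        rw [this]
      have hTl : ∀ u : V, u ≠ v →
          pdList (((g v).children (Sum.inl u)).toList.map idx)
            (fun y => (f (Sum.inl u)).1 y (idx (Sum.inl u))) = P u a := by
        intro u hu
        rw [hchl, if_neg hu, hl]
        rw [pdList_perm (toList_image_perm (τ.children u) Sum.inl Sum.inl_injective idx)
          _ (hFs _ _)]
        have : idx ∘ Sum.inl = a := funext hl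
        rw [this]
      have hTv :
          pdList (((g v).children (Sum.inl v)).toList.map idx)
            (fun y => (f (Sum.inl v)).1 y (idx (Sum.inl v))) = pd (b s.root) (P v a) := by
        rw [hchl, if_pos rfl, hl]
        have hnot : Sum.inr s.root ∉ (τ.children v).image Sum.inl := by simp
        have hperm :
            ((insert (Sum.inr s.root) ((τ.children v).image Sum.inl)).toList.map idx).Perm
              (idx (Sum.inr s.root) :: (((τ.children v).image Sum.inl).toList.map idx)) :=
          (Finset.toList_insert hnot).map idx
        rw [pdList_perm hperm _ (hFs _ _)]
        show pd (idx (Sum.inr s.root))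
          (pdList ((((τ.children v).image Sum.inl).toList.map idx))
            (fun y => (f (Sum.inl v)).1 y (a v))) = _
        rw [pdList_perm (toList_image_perm (τ.children v) Sum.inl Sum.inl_injective idx)
          _ (hFs _ _)]
        have : idx ∘ Sum.inl = a := funext hl
        rw [this, hr]
      rw [← Finset.mul_prod_erase Finset.univ _ (Finset.mem_univ v), hTv,
        Finset.prod_congr rfl (fun u hu => congrFun (hTl u (Finset.ne_of_mem_erase hu)) x),
        Finset.prod_congr rfl (fun u _ => congrFun (hTr u) x)]
      ring
    · simp only [hc, if_false]
  -- Step B : compute the right-hand side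
  have stepB : tri (Fel d τ (fun v => f (Sum.inl v))) (Fel d s (fun u => f (Sum.inr u))) x j =
      ∑ b : V' → Fin d, (∏ u : V', Q u b x) *
        ∑ a : V → Fin d,
          if a τ.root = j then
            ∑ v : V, (∏ u ∈ Finset.univ.erase v, P u a x) * pd (b s.root) (P v a) x
          else 0 := by
    have hA : ∀ a : V → Fin d,
        DifferentiableAt ℝ (fun y => if a τ.root = j then ∏ v : V, P v a y else 0) x := by
      intro a
      by_cases hc : a τ.root = j
      · simp only [hc, if_true]
        have h1 : ContDiff ℝ 1 fun y => ∏ v : V, P v a y := by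
          have h2 := contDiff_prod' (𝕜 := ℝ) (n := 1) (t := Finset.univ)
            (f := fun v => P v a) (fun v _ => hP v a 1)
          have : (∏ v ∈ Finset.univ, P v a) = fun y => ∏ v : V, P v a y := by
            funext y; rw [Finset.prod_apply]
          rwa [this] at h2
        exact (h1.differentiable (by norm_num)).differentiableAt
      · simp only [hc, if_false]; exact differentiableAt_const _
    have hD : fderiv ℝ (fun y => Fel d τ (fun v => f (Sum.inl v)) y j) x =
        ∑ a : V → Fin d,
          fderiv ℝ (fun y => if a τ.root = j then ∏ v : V, P v a y else 0) x := by
      rw [show (fun y => Fel d τ (fun v => f (Sum.inl v)) y j)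
          = (fun y => ∑ a : V → Fin d, if a τ.root = j then ∏ v : V, P v a y else 0) from rfl]
      exact fderiv_fun_sum fun a _ => hA a
    have key : ∀ i : Fin d,
        fderiv ℝ (fun y => Fel d τ (fun v => f (Sum.inl v)) y j) x (Pi.single i 1) =
          ∑ a : V → Fin d,
            if a τ.root = j then
              ∑ v : V, (∏ u ∈ Finset.univ.erase v, P u a x) * pd i (P v a) x
            else 0 := by
      intro i
      rw [hD, ContinuousLinearMap.sum_apply]
      refine Finset.sum_congr rfl fun a _ => ?_
      by_cases hc : a τ.root = j
      · simp only [hc, if_true]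
        have hpr : fderiv ℝ (fun y => ∏ v : V, P v a y) x =
            ∑ v : V, (∏ u ∈ Finset.univ.erase v, P u a x) • fderiv ℝ (P v a) x :=
          fderiv_finset_prod fun v _ => ((hP v a).diff).differentiableAt
        rw [hpr, ContinuousLinearMap.sum_apply]
        refine Finset.sum_congr rfl fun v _ => ?_
        simp only [ContinuousLinearMap.smul_apply, smul_eq_mul]
        rfl
      · simp only [hc, if_false]
        rw [show (fun _ : Fin d → ℝ => (0 : ℝ)) = fun _ => (0 : ℝ) from rfl, fderiv_fun_const]
        simp
    calc tri (Fel d τ (fun v => f (Sum.inl v))) (Fel d s (fun u => f (Sum.inr u))) x j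
        = ∑ i : Fin d, (Fel d s (fun u => f (Sum.inr u)) x i) *
            fderiv ℝ (fun y => Fel d τ (fun v => f (Sum.inl v)) y j) x (Pi.single i 1) := rfl
      _ = ∑ i : Fin d, (∑ b : V' → Fin d, if b s.root = i then ∏ u : V', Q u b x else 0) *
            (∑ a : V → Fin d,
              if a τ.root = j then
                ∑ v : V, (∏ u ∈ Finset.univ.erase v, P u a x) * pd i (P v a) x
              else 0) := by
          refine Finset.sum_congr rfl fun i _ => ?_
          rw [key i]
          rfl
      _ = ∑ b : V' → Fin d, ∑ i : Fin d,
            if b s.root = i then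
              (∏ u : V', Q u b x) *
                (∑ a : V → Fin d,
                  if a τ.root = j then
                    ∑ v : V, (∏ u ∈ Finset.univ.erase v, P u a x) * pd i (P v a) x
                  else 0)
            else 0 := by
          simp only [Finset.sum_mul, ite_mul, zero_mul]
          exact Finset.sum_comm
      _ = ∑ b : V' → Fin d, (∏ u : V', Q u b x) *
            ∑ a : V → Fin d,
              if a τ.root = j then
                ∑ v : V, (∏ u ∈ Finset.univ.erase v, P u a x) * pd (b s.root) (P v a) x
              else 0 := by
          refine Finset.sum_congr rfl fun b _ => ?_
          simp
  -- combine
  rw [stepB]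
  simp only [stepA]
  refine Finset.sum_comm.trans ?_
  refine (Finset.sum_congr rfl fun a _ => Finset.sum_comm).trans ?_
  refine Finset.sum_comm.trans ?_
  refine Finset.sum_congr rfl fun b _ => ?_
  rw [Finset.mul_sum]
  refine Finset.sum_congr rfl fun a _ => ?_
  by_cases hc : a τ.root = j
  · simp only [hc, if_true, Finset.mul_sum]
    exact Finset.sum_congr rfl fun v _ => by ring
  · simp [hc]
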